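/- arXiv:0912.0620 — 3 statements merged into one kernel-verified Lean document; each statement's English description precedes it below -/
import Mathlib

section
/- For every prime p with p ≡ 1 (mod 4), the product of (3/4 + k) for 0 ≤ k ≤ (p−3)/2 is congruent modulo p^2 to the product of (1/4 + k) for (p+1)/2 ≤ k ≤ p−1, as rational numbers whose difference has p-adic valuation at least 2. -/
open Finset

lemma prod_add_eps {R : Type*} [CommRing R] (ε : R) (hε : ε * ε = 0)
    (s : Finset ℕ) (a : ℕ → R) :
    ∏ i ∈ s, (a i + ε) = ∏ i ∈ s, a i + ε * ∑ i ∈ s, ∏ j ∈ s.erase i, a j := by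
  classical
  refine Finset.induction_on s (by simp) ?_
  intro i s hi ih
  have key : ∑ j ∈ s, ∏ k ∈ (insert i s).erase j, a k
      = a i * ∑ j ∈ s, ∏ k ∈ s.erase j, a k := by
    rw [mul_sum]
    refine sum_congr rfl (fun j hj => ?_)
    rw [Finset.erase_insert_of_ne (by rintro rfl; exact hi hj),
      prod_insert (fun h => hi (Finset.mem_of_mem_erase h))]
  rw [prod_insert hi, prod_insert hi, ih, sum_insert hi, erase_insert hi, key]
  linear_combination (∑ j ∈ s, ∏ k ∈ s.erase j, a k) * hε

lemma sum_inv_zero (p n : ℕ) (hp : p.Prime) (hpn : p = 2*n+1) :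
    ∑ j ∈ range n, (((4*j+3 : ℕ) : ZMod p))⁻¹ = 0 := by
  haveI := Fact.mk hp
  have hrefl := Finset.sum_range_reflect (fun j => (((4*j+3 : ℕ) : ZMod p))⁻¹) n
  have hneg : ∀ j ∈ range n, (((4*(n-1-j)+3 : ℕ) : ZMod p))⁻¹ = -(((4*j+3 : ℕ) : ZMod p))⁻¹ := by
    intro j hj
    rw [mem_range] at hj
    have hadd : ((4*(n-1-j)+3 : ℕ) : ZMod p) + ((4*j+3 : ℕ) : ZMod p) = 0 := by
      rw [← Nat.cast_add]
      have he : 4*(n-1-j)+3 + (4*j+3) = 2*p := by omega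
      rw [he]
      push_cast [ZMod.natCast_self]
      ring
    rw [eq_neg_of_add_eq_zero_left hadd, inv_neg]
  rw [Finset.sum_congr rfl hneg, Finset.sum_neg_distrib] at hrefl
  have h2' : (2 : ZMod p) ≠ 0 := by
    intro h
    have hd : p ∣ 2 := (ZMod.natCast_eq_zero_iff 2 p).mp (by exact_mod_cast h)
    have := Nat.le_of_dvd (by norm_num) hd
    have := hp.two_le
    omega
  have hmul : (2 : ZMod p) * (∑ j ∈ range n, (((4*j+3 : ℕ) : ZMod p))⁻¹) = 0 := by
    rw [two_mul]
    nth_rewrite 1 [← hrefl]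
    exact neg_add_cancel _
  rcases mul_eq_zero.mp hmul with h | h
  · exact absurd h h2'
  · exact h

lemma key_dvd (p n : ℕ) (hp : p.Prime) (h4 : p % 4 = 1) (hpn : p = 2*n+1) :
    ((p : ℤ))^2 ∣ (∏ k ∈ range n, (4*(k:ℤ)+3+2*p)) - ∏ k ∈ range n, (4*(k:ℤ)+3) := by
  haveI := Fact.mk hp
  -- p does not divide 4j+3 for j < n
  have hunit : ∀ j ∈ range n, ((4*j+3 : ℕ) : ZMod p) ≠ 0 := by
    intro j hj h
    rw [mem_range] at hj
    have hd : p ∣ 4*j+3 := (ZMod.natCast_eq_zero_iff _ p).mp h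
    obtain ⟨c, hc⟩ := hd
    rcases Nat.lt_or_ge c 2 with h' | h' <;> [skip; nlinarith [hp.two_le]]
    interval_cases c <;> omega
  -- the symmetric-function sum is divisible by p
  have hT : (p : ℤ) ∣ ∑ j ∈ range n, ∏ i ∈ (range n).erase j, (4*(i:ℤ)+3) := by
    rw [← ZMod.intCast_zmod_eq_zero_iff_dvd]
    push_cast
    have hprod : ∀ j ∈ range n, (∏ i ∈ (range n).erase j, (4*(i:ZMod p)+3))
        = (∏ i ∈ range n, (4*(i:ZMod p)+3)) * (((4*j+3 : ℕ) : ZMod p))⁻¹ := by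
      intro j hj
      have hpe := Finset.prod_erase_mul (range n) (fun i => (4*(i:ZMod p)+3)) hj
      have haj : ((4*j+3 : ℕ) : ZMod p) = 4*(j:ZMod p)+3 := by push_cast; ring
      rw [← hpe, haj, mul_assoc, mul_inv_cancel₀ (show (4*(j:ZMod p)+3) ≠ 0 from by
        rw [← haj]; exact hunit j hj), mul_one]
    rw [Finset.sum_congr rfl hprod, ← mul_sum, sum_inv_zero p n hp hpn, mul_zero]
  rw [show ((p:ℤ))^2 = ((p^2:ℕ):ℤ) from by push_cast; ring,
    ← ZMod.intCast_zmod_eq_zero_iff_dvd]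
  push_cast
  have hpp : ((p : ZMod (p^2)) * p) = 0 := by
    have h0 : ((p^2 : ℕ) : ZMod (p^2)) = 0 := ZMod.natCast_self _
    push_cast at h0
    linear_combination h0
  have hε : ((2*(p:ZMod (p^2))) * (2*p)) = 0 := by linear_combination (4:ZMod (p^2)) * hpp
  have he := prod_add_eps ((2*(p:ZMod (p^2)))) hε (range n) (fun i => 4*(i:ZMod (p^2))+3)
  simp only [] at he
  obtain ⟨m, hm⟩ := hT
  have hTc : (∑ i ∈ range n, ∏ j ∈ (range n).erase i, (4*(j:ZMod (p^2))+3))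
      = (p : ZMod (p^2)) * (m : ZMod (p^2)) := by
    have hc := congrArg (Int.cast : ℤ → ZMod (p^2)) hm
    push_cast at hc
    rw [← hc]
  have hre : ∏ k ∈ range n, (4*(k:ZMod (p^2))+3+2*(p:ZMod (p^2)))
      = ∏ i ∈ range n, ((4*(i:ZMod (p^2))+3)+2*(p:ZMod (p^2))) :=
    Finset.prod_congr rfl (fun k _ => by ring)
  rw [hre, he, hTc]
  linear_combination (2*(m : ZMod (p^2))) * hpp

/-- For every prime `p ≡ 1 (mod 4)`,
`∏_{k=0}^{(p-3)/2} (3/4 + k) ≡ ∏_{k=(p+1)/2}^{p-1} (1/4 + k) (mod p^2)`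
as rationals, i.e. the difference has `p`-adic valuation at least `2`. -/
theorem prod_quarter_halves_cong (p : ℕ) (hp : p.Prime) (h4 : p % 4 = 1) :
    padicNorm p
      ((∏ k ∈ Finset.range ((p - 1) / 2), (3/4 + (k : ℚ))) -
        (∏ k ∈ Finset.Icc ((p + 1) / 2) (p - 1), (1/4 + (k : ℚ))))
      ≤ (p : ℚ) ^ (-(2 : ℤ)) := by
  haveI := Fact.mk hp
  set n := (p - 1) / 2 with hn
  have hp2 := hp.two_le
  have hpn : p = 2*n+1 := by omega
  have hpq : (p : ℚ) = 2*(n:ℚ)+1 := by rw [hpn]; push_cast; ring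
  have hP1 : (∏ k ∈ Finset.range n, (3/4 + (k : ℚ)))
      = ((∏ k ∈ range n, (4*(k:ℤ)+3) : ℤ) : ℚ) / 4^n := calc
    ∏ k ∈ Finset.range n, (3/4 + (k : ℚ)) = ∏ k ∈ range n, ((4*(k:ℚ)+3)/4) :=
      Finset.prod_congr rfl (fun k _ => by ring)
    _ = (∏ k ∈ range n, (4*(k:ℚ)+3))/4^n := by
      rw [Finset.prod_div_distrib, Finset.prod_const, Finset.card_range]
    _ = ((∏ k ∈ range n, (4*(k:ℤ)+3) : ℤ) : ℚ) / 4^n := by push_cast; ring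
  have hIcc : Finset.Icc ((p + 1) / 2) (p - 1) = Finset.Ico (n+1) (2*n+1) := by
    rw [show (p+1)/2 = n+1 by omega, show p-1 = 2*n by omega, Finset.Ico_add_one_right_eq_Icc]
  have hP2 : (∏ k ∈ Finset.Icc ((p + 1) / 2) (p - 1), (1/4 + (k : ℚ)))
      = ((∏ k ∈ range n, (4*(k:ℤ)+3+2*p) : ℤ) : ℚ) / 4^n := by
    rw [hIcc, Finset.prod_Ico_eq_prod_range, show 2*n+1 - (n+1) = n by omega]
    calc ∏ k ∈ range n, (1/4 + ((n+1+k : ℕ) : ℚ))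
        = ∏ k ∈ range n, ((4*(k:ℚ)+3+2*(p:ℚ))/4) :=
      Finset.prod_congr rfl (fun k _ => by push_cast [hpq]; ring)
    _ = (∏ k ∈ range n, (4*(k:ℚ)+3+2*(p:ℚ)))/4^n := by
      rw [Finset.prod_div_distrib, Finset.prod_const, Finset.card_range]
    _ = ((∏ k ∈ range n, (4*(k:ℤ)+3+2*p) : ℤ) : ℚ) / 4^n := by push_cast; ring
  rw [hP1, hP2, div_sub_div_same, ← Int.cast_sub]
  have h4pow : padicNorm p ((4:ℚ)^n) = 1 := by
    rw [show ((4:ℚ)^n) = (((4^n : ℤ)):ℚ) by push_cast; ring, padicNorm.int_eq_one_iff]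
    intro hd
    have : p ∣ 4^n := by exact_mod_cast hd
    have := Nat.le_of_dvd (by positivity) (hp.dvd_of_dvd_pow this)
    omega
  rw [padicNorm.div, h4pow, div_one]
  rw [show (-(2:ℤ)) = (-(2:ℕ) : ℤ) by norm_num, ← padicNorm.dvd_iff_norm_le]
  have hd := key_dvd p n hp h4 hpn
  push_cast
  exact dvd_sub_comm.mp hd
end

section
/- For a prime p ≡ 1 (mod 4) and nonnegative integer n, define F(n) = 4^{p−1} · ∏_{0≤j≤p−1, j≠(p−1)/4} (1+4j+4np)^2 · ∏_{i=0}^{p−2} (1+i+np)^{−2}. Then F(n) ≡ F(0) (mod p^2) for all n, where the congruence is between p-adic units. -/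
open Finset

lemma sum_univ_zmod_eq_zero (p : ℕ) [Fact p.Prime] (hp2 : p ≠ 2) :
    ∑ x : ZMod p, x = 0 := by
  have h : ∑ x : ZMod p, -x = ∑ x : ZMod p, x :=
    Fintype.sum_bijective _ neg_involutive.bijective _ id (fun x => rfl)
  rw [Finset.sum_neg_distrib] at h
  have h2 : (2 : ZMod p) * ∑ x : ZMod p, x = 0 := by linear_combination -h
  have h2' : (2 : ZMod p) ≠ 0 := by
    intro hc
    have : ((2:ℕ) : ZMod p) = 0 := by exact_mod_cast hc
    rw [ZMod.natCast_eq_zero_iff] at this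
    exact hp2 ((Nat.prime_dvd_prime_iff_eq (Fact.out) Nat.prime_two).mp this)
  exact (mul_eq_zero.mp h2).resolve_left h2'

lemma sum_univ_zmod_inv_eq_zero (p : ℕ) [Fact p.Prime] (hp2 : p ≠ 2) :
    ∑ x : ZMod p, x⁻¹ = 0 := by
  have h : ∑ x : ZMod p, x⁻¹ = ∑ x : ZMod p, x :=
    Fintype.sum_bijective _ inv_involutive.bijective _ id (fun x => rfl)
  rw [h]
  exact sum_univ_zmod_eq_zero p hp2

lemma prod_add_expand (s : Finset ℕ) (f : ℕ → ℤ) (c : ℤ) :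
    ∏ j ∈ s, (f j + c) ≡
      (∏ j ∈ s, f j) + c * ∑ j ∈ s, ∏ k ∈ s.erase j, f k [ZMOD c^2] := by
  classical
  induction s using Finset.induction_on with
  | empty => simp
  | @insert a s ha ih =>
    have hsum : ∑ j ∈ insert a s, ∏ k ∈ (insert a s).erase j, f k
        = (∏ k ∈ s, f k) + f a * ∑ j ∈ s, ∏ k ∈ s.erase j, f k := by
      rw [Finset.sum_insert ha, Finset.erase_insert ha, Finset.mul_sum]
      congr 1
      refine Finset.sum_congr rfl fun j hj => ?_
      have hja : a ≠ j := fun h => ha (h ▸ hj)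
      rw [Finset.erase_insert_of_ne hja, Finset.prod_insert (fun h => ha (Finset.mem_of_mem_erase h))]
    rw [Finset.prod_insert ha, Finset.prod_insert ha, hsum]
    refine (ih.mul_left (f a + c)).trans ?_
    exact Int.modEq_iff_dvd.mpr ⟨-(∑ j ∈ s, ∏ k ∈ s.erase j, f k), by ring⟩


lemma prod_shift_modEq (p : ℕ) (hp : p.Prime) (hp2 : p ≠ 2) (s : Finset ℕ) (f : ℕ → ℤ)
    (m : ℤ) (hcard : s.card = p - 1)
    (hinj : Set.InjOn (fun j => ((f j : ZMod p))) s)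
    (hne : ∀ j ∈ s, ((f j : ZMod p)) ≠ 0) :
    ∏ j ∈ s, (f j + m * p) ≡ ∏ j ∈ s, f j [ZMOD ((p:ℤ))^2] := by
  classical
  haveI : Fact p.Prime := ⟨hp⟩
  have h1 := (prod_add_expand s f (m * p)).of_dvd (⟨m^2, by ring⟩ : ((p:ℤ))^2 ∣ (m*p)^2)
  set S : ℤ := ∑ j ∈ s, ∏ k ∈ s.erase j, f k with hS
  have hpS : (p:ℤ) ∣ S := by
    rw [← ZMod.intCast_zmod_eq_zero_iff_dvd]
    push_cast [hS]
    have hstep : ∀ j ∈ s, ∏ k ∈ s.erase j, ((f k : ZMod p)) =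
        (∏ k ∈ s, ((f k : ZMod p))) * ((f j : ZMod p))⁻¹ := by
      intro j hj
      rw [← Finset.mul_prod_erase s _ hj, mul_comm ((f j : ZMod p)), mul_assoc,
        mul_inv_cancel₀ (hne j hj), mul_one]
    rw [Finset.sum_congr rfl hstep, ← Finset.mul_sum]
    have himg : s.image (fun j => ((f j : ZMod p))) = Finset.univ.erase 0 := by
      apply Finset.eq_of_subset_of_card_le
      · intro x hx
        obtain ⟨j, hj, rfl⟩ := Finset.mem_image.mp hx
        exact Finset.mem_erase.mpr ⟨hne j hj, Finset.mem_univ _⟩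
      · rw [Finset.card_erase_of_mem (Finset.mem_univ _), Finset.card_univ, ZMod.card,
          Finset.card_image_of_injOn hinj, hcard]
    have hsum0 : ∑ j ∈ s, ((f j : ZMod p))⁻¹ = 0 := by
      rw [← Finset.sum_image (fun a ha b hb h => hinj ha hb h), himg,
        Finset.sum_erase _ inv_zero]
      exact sum_univ_zmod_inv_eq_zero p hp2
    rw [hsum0, mul_zero]
  obtain ⟨t, ht⟩ := hpS
  refine h1.trans ?_
  rw [ht]
  exact Int.modEq_iff_dvd.mpr ⟨-(m*t), by ring⟩

/-- For a prime `p ≡ 1 (mod 4)` and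
`F(n) = 4^{p-1} ∏_{0≤j≤p-1, j≠(p-1)/4} (1+4j+4np)^2 ∏_{i=0}^{p-2} (1+i+np)^{-2}`,
we have `F(n) ≡ F(0) (mod p^2)` for all `n`. -/
theorem F_indep_of_n (p : ℕ) (hp : p.Prime) (h4 : p % 4 = 1)
    (F : ℕ → ℚ)
    (hF : ∀ n, F n = (4 : ℚ) ^ (p - 1)
      * (∏ j ∈ (Finset.range p).erase ((p - 1) / 4), (1 + 4 * (j : ℚ) + 4 * n * p) ^ 2)
      * (∏ i ∈ Finset.range (p - 1), ((1 + (i : ℚ) + n * p)⁻¹) ^ 2))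
    (n : ℕ) :
    padicNorm p (F n - F 0) ≤ (p : ℚ) ^ (-(2 : ℤ)) := by
  haveI : Fact p.Prime := ⟨hp⟩
  have hp2 : p ≠ 2 := by omega
  have hp5 : 5 ≤ p := by
    have h2 := hp.two_le
    rcases Nat.lt_or_ge p 5 with h | h
    · interval_cases p <;> omega
    · exact h
  set q : ℕ := (p - 1) / 4 with hq
  have h4q : 4 * q = p - 1 := by omega
  set sA := (Finset.range p).erase q with hsA
  set sB := Finset.range (p - 1) with hsB
  -- cardinalities
  have hcardA : sA.card = p - 1 := by
    rw [hsA, Finset.card_erase_of_mem (Finset.mem_range.mpr (by omega)), Finset.card_range]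
  have hcardB : sB.card = p - 1 := by rw [hsB, Finset.card_range]
  -- 4 ≠ 0 in ZMod p
  have h4ne : ((4:ℕ) : ZMod p) ≠ 0 := by
    rw [Ne, ZMod.natCast_eq_zero_iff]
    intro hd
    have := Nat.le_of_dvd (by norm_num) hd
    omega
  -- injectivity and nonvanishing for family A
  have hneA : ∀ j ∈ sA, (((1 + 4*(j:ℤ) : ℤ) : ZMod p)) ≠ 0 := by
    intro j hj hzero
    obtain ⟨hjq, hjp⟩ := Finset.mem_erase.mp hj
    rw [Finset.mem_range] at hjp
    have : (((1 + 4*j : ℕ) : ℤ) : ZMod p) = 0 := by push_cast; push_cast at hzero; exact hzero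
    rw [Int.cast_natCast, ZMod.natCast_eq_zero_iff] at this
    obtain ⟨k, hk⟩ := this
    have hk0 : k ≠ 0 := by rintro rfl; omega
    have hklt : k < 4 := by
      by_contra hge
      have : p * 4 ≤ p * k := Nat.mul_le_mul_left p (by omega)
      omega
    interval_cases k <;> omega
  have hinjA : Set.InjOn (fun j : ℕ => (((1 + 4*(j:ℤ) : ℤ) : ZMod p))) (sA : Set ℕ) := by
    intro j hj k hk h
    simp only at h
    push_cast at h
    have hj' : j < p := by simp only [hsA, Finset.coe_erase, Set.mem_diff, Finset.mem_coe, Finset.mem_range] at hj; exact hj.1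
    have hk' : k < p := by simp only [hsA, Finset.coe_erase, Set.mem_diff, Finset.mem_coe, Finset.mem_range] at hk; exact hk.1
    have h4 : ((4:ℕ) : ZMod p) * (j : ZMod p) = ((4:ℕ) : ZMod p) * (k : ZMod p) := by
      push_cast
      linear_combination h
    have hjk : (j : ZMod p) = (k : ZMod p) := mul_left_cancel₀ h4ne h4
    calc j = (ZMod.val (j : ZMod p)) := (ZMod.val_cast_of_lt hj').symm
    _ = (ZMod.val (k : ZMod p)) := by rw [hjk]
    _ = k := ZMod.val_cast_of_lt hk'
  -- family B
  have hneB : ∀ i ∈ sB, (((1 + (i:ℤ) : ℤ) : ZMod p)) ≠ 0 := by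
    intro i hi hzero
    rw [hsB, Finset.mem_range] at hi
    have : (((1 + i : ℕ) : ℤ) : ZMod p) = 0 := by push_cast; push_cast at hzero; exact hzero
    rw [Int.cast_natCast, ZMod.natCast_eq_zero_iff] at this
    have := Nat.le_of_dvd (by omega) this
    omega
  have hinjB : Set.InjOn (fun i : ℕ => (((1 + (i:ℤ) : ℤ) : ZMod p))) (sB : Set ℕ) := by
    intro j hj k hk h
    simp only at h
    push_cast at h
    have hj' : j < p - 1 := by simpa [hsB] using hj
    have hk' : k < p - 1 := by simpa [hsB] using hk
    have hjk : (j : ZMod p) = (k : ZMod p) := by linear_combination h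
    calc j = (ZMod.val (j : ZMod p)) := (ZMod.val_cast_of_lt (by omega)).symm
    _ = (ZMod.val (k : ZMod p)) := by rw [hjk]
    _ = k := ZMod.val_cast_of_lt (by omega)
  -- the congruences
  have hA : ∀ m : ℕ, (∏ j ∈ sA, (1 + 4*(j:ℤ) + 4*(m:ℤ)*(p:ℤ)))
      ≡ (∏ j ∈ sA, (1 + 4*(j:ℤ) + 4*((0:ℕ):ℤ)*(p:ℤ))) [ZMOD ((p:ℤ))^2] := by
    intro m
    have h1 := prod_shift_modEq p hp hp2 sA (fun j => 1 + 4*(j:ℤ)) (4*m) hcardA hinjA hneA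
    have e1 : ∀ j ∈ sA, (1 + 4*(j:ℤ) + 4*(m:ℤ)*(p:ℤ)) = (1 + 4*(j:ℤ) + (4*(m:ℤ))*(p:ℤ)) := by
      intro j _; ring
    have e2 : ∀ j ∈ sA, (1 + 4*(j:ℤ) + 4*((0:ℕ):ℤ)*(p:ℤ)) = (1 + 4*(j:ℤ)) := by
      intro j _; push_cast; ring
    rw [Finset.prod_congr rfl e1, Finset.prod_congr rfl e2]
    exact h1
  have hB : ∀ m : ℕ, (∏ i ∈ sB, (1 + (i:ℤ) + (m:ℤ)*(p:ℤ)))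
      ≡ (∏ i ∈ sB, (1 + (i:ℤ) + ((0:ℕ):ℤ)*(p:ℤ))) [ZMOD ((p:ℤ))^2] := by
    intro m
    have h1 := prod_shift_modEq p hp hp2 sB (fun i => 1 + (i:ℤ)) m hcardB hinjB hneB
    have e2 : ∀ i ∈ sB, (1 + (i:ℤ) + ((0:ℕ):ℤ)*(p:ℤ)) = (1 + (i:ℤ)) := by
      intro i _; push_cast; ring
    rw [Finset.prod_congr rfl e2]
    exact h1
  -- rewrite F in terms of integer products
  have hcast : ∀ m : ℕ, F m = (4:ℚ)^(p-1)
      * (((∏ j ∈ sA, (1 + 4*(j:ℤ) + 4*(m:ℤ)*(p:ℤ))) : ℤ) : ℚ)^2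
      * ((((∏ i ∈ sB, (1 + (i:ℤ) + (m:ℤ)*(p:ℤ))) : ℤ) : ℚ)^2)⁻¹ := by
    intro m
    rw [hF m]
    congr 1
    · congr 1
      push_cast
      rw [Finset.prod_pow]
    · push_cast
      rw [← Finset.prod_pow, ← Finset.prod_inv_distrib]
      exact Finset.prod_congr rfl fun i _ => by rw [inv_pow]
  -- integer abbreviations
  set An : ℤ := ∏ j ∈ sA, (1 + 4*(j:ℤ) + 4*(n:ℤ)*(p:ℤ)) with hAn
  set A0 : ℤ := ∏ j ∈ sA, (1 + 4*(j:ℤ) + 4*((0:ℕ):ℤ)*(p:ℤ)) with hA0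
  set Bn : ℤ := ∏ i ∈ sB, (1 + (i:ℤ) + (n:ℤ)*(p:ℤ)) with hBn
  set B0 : ℤ := ∏ i ∈ sB, (1 + (i:ℤ) + ((0:ℕ):ℤ)*(p:ℤ)) with hB0
  -- B's are nonzero mod p (hence nonzero)
  have hBmod : ∀ m : ℕ, ((((∏ i ∈ sB, (1 + (i:ℤ) + (m:ℤ)*(p:ℤ))) : ℤ) : ZMod p)) ≠ 0 := by
    intro m
    push_cast
    simp only [ZMod.natCast_self, mul_zero, add_zero]
    rw [Finset.prod_ne_zero_iff]
    intro i hi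
    have := hneB i hi
    push_cast at this ⊢
    exact this
  have hBnne : (Bn : ℚ) ≠ 0 := by
    intro hc
    have : Bn = 0 := by exact_mod_cast hc
    exact hBmod n (by rw [← hBn, this]; simp)
  have hB0ne : (B0 : ℚ) ≠ 0 := by
    intro hc
    have : B0 = 0 := by exact_mod_cast hc
    exact hBmod 0 (by rw [← hB0, this]; simp)
  -- the difference as a single fraction
  have key : F n - F 0 = ((4^(p-1) * (An^2 * B0^2 - A0^2 * Bn^2) : ℤ) : ℚ)
      / (((Bn^2 * B0^2 : ℤ)) : ℚ) := by
    rw [hcast n, hcast 0, ← hAn, ← hA0, ← hBn, ← hB0]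
    push_cast
    field_simp
  rw [key, padicNorm.div]
  have hden : padicNorm p ((Bn^2 * B0^2 : ℤ) : ℚ) = 1 := by
    rw [padicNorm.int_eq_one_iff]
    intro hd
    have hpZ : Prime ((p:ℕ) : ℤ) := Nat.prime_iff_prime_int.mp hp
    rcases hpZ.dvd_mul.mp hd with h | h
    · have := hpZ.dvd_of_dvd_pow h
      rw [← ZMod.intCast_zmod_eq_zero_iff_dvd] at this
      exact hBmod n this
    · have := hpZ.dvd_of_dvd_pow h
      rw [← ZMod.intCast_zmod_eq_zero_iff_dvd] at this
      exact hBmod 0 this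
  rw [hden, div_one]
  have hnum : ((p^2 : ℕ) : ℤ) ∣ (4^(p-1) * (An^2 * B0^2 - A0^2 * Bn^2) : ℤ) := by
    have hmod : An^2 * B0^2 ≡ A0^2 * Bn^2 [ZMOD ((p:ℤ))^2] :=
      ((hA n).pow 2).mul (((hB n).pow 2).symm)
    have : ((p:ℤ))^2 ∣ (An^2 * B0^2 - A0^2 * Bn^2) := (Int.ModEq.dvd hmod.symm)
    push_cast
    exact Dvd.dvd.mul_left this _
  have := padicNorm.dvd_iff_norm_le.mp hnum
  convert this using 2
  norm_num
end

section
/- For a prime p ≡ 1 (mod 4) and every nonnegative integer n, 4^p · ∏_{i=0}^{p−1} ((1+4(i+np))/(1+i+np))^2 ≡ 4·((1+4n)/(1+n))^2 (mod p^2), as an equality of p-adic units modulo p^2 (assuming 1+n is coprime to p). -/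
open Finset


private lemma expand_prod {R : Type*} [CommRing R] {e : R} (he : e ^ 2 = 0)
    (s : Finset ℕ) (c d : ℕ → R) :
    ∏ i ∈ s, (c i + e * d i)
      = (∏ i ∈ s, c i) + e * ∑ i ∈ s, d i * ∏ j ∈ s.erase i, c j := by
  classical
  induction s using Finset.induction_on with
  | empty => simp
  | @insert a s ha ih =>
    have h1 : ∑ i ∈ s, d i * ∏ j ∈ (insert a s).erase i, c j
        = c a * ∑ i ∈ s, d i * ∏ j ∈ s.erase i, c j := by
      rw [Finset.mul_sum]
      refine Finset.sum_congr rfl fun i hi => ?_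
      have hai : a ≠ i := fun h => ha (h ▸ hi)
      rw [Finset.erase_insert_of_ne hai,
        Finset.prod_insert (fun h => ha (Finset.mem_of_mem_erase h))]
      ring
    rw [Finset.prod_insert ha, Finset.prod_insert ha, ih, Finset.sum_insert ha, Finset.erase_insert ha, h1]
    linear_combination (d a * ∑ i ∈ s, d i * ∏ j ∈ s.erase i, c j) * he

private lemma mul_p_congr (p : ℕ) (x y : ℕ) (h : (x : ZMod p) = (y : ZMod p)) :
    (p : ZMod (p ^ 2)) * (x : ZMod (p ^ 2)) = (p : ZMod (p ^ 2)) * (y : ZMod (p ^ 2)) := by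
  have hd : (p : ℤ) ∣ (x : ℤ) - (y : ℤ) := by
    rw [← ZMod.intCast_zmod_eq_zero_iff_dvd]
    push_cast
    rw [sub_eq_zero]
    exact_mod_cast h
  obtain ⟨k, hk⟩ := hd
  have h3 : (p : ZMod (p ^ 2)) ^ 2 = 0 := by
    have := ZMod.natCast_self (p ^ 2)
    push_cast at this
    linear_combination this
  have h2 : (x : ZMod (p ^ 2)) - (y : ZMod (p ^ 2))
      = (p : ZMod (p ^ 2)) * ((k : ℤ) : ZMod (p ^ 2)) := by
    have h5 : (((x : ℤ) - (y : ℤ) : ℤ) : ZMod (p ^ 2)) = (((p : ℤ) * k : ℤ) : ZMod (p ^ 2)) := by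
      rw [hk]
    push_cast at h5
    linear_combination h5
  linear_combination (p : ZMod (p ^ 2)) * h2 + ((k : ℤ) : ZMod (p ^ 2)) * h3

private lemma sum_inv_zero_s7 (p : ℕ) (hp : p.Prime) (hodd : p % 2 = 1)
    (s : Finset ℕ) (hs : ∀ r ∈ s, 0 < r ∧ r < p) (hcl : ∀ r ∈ s, p - r ∈ s) :
    ∑ r ∈ s, ((r : ZMod p))⁻¹ = 0 := by
  haveI := Fact.mk hp
  refine Finset.sum_involution (fun a _ => p - a) ?_ ?_ ?_ ?_
  · intro a ha
    obtain ⟨h0, h1⟩ := hs a ha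
    have h2 : ((p - a : ℕ) : ZMod p) = - (a : ZMod p) := by
      push_cast [Nat.cast_sub (le_of_lt h1)]
      rw [ZMod.natCast_self]
      ring
    rw [h2, inv_neg]
    ring
  · intro a ha _
    obtain ⟨h0, h1⟩ := hs a ha
    simp only [ne_eq]
    omega
  · exact fun a ha => hcl a ha
  · intro a ha
    obtain ⟨h0, h1⟩ := hs a ha
    omega

private lemma choose_neg_one (p : ℕ) (hp : p.Prime) :
    ∀ j, j ≤ p - 1 → (((p - 1).choose j : ℕ) : ZMod p) = (-1) ^ j := by
  haveI := Fact.mk hp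
  intro j
  induction j with
  | zero => simp
  | succ j ih =>
    intro hj
    have hple := hp.two_le
    have h1 : ((p.choose (j + 1) : ℕ) : ZMod p) = 0 := by
      rw [ZMod.natCast_eq_zero_iff]
      exact hp.dvd_choose_self (Nat.succ_ne_zero j) (by omega)
    have h2 : p.choose (j + 1) = (p - 1).choose j + (p - 1).choose (j + 1) := by
      have h3 := Nat.choose_succ_succ (p - 1) j
      rwa [show (p - 1).succ = p by omega] at h3
    rw [h2] at h1
    push_cast at h1
    rw [ih (by omega)] at h1
    have h4 : (((p - 1).choose (j + 1) : ℕ) : ZMod p) = -(-1) ^ j := by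
      linear_combination h1
    rw [h4]
    ring

private lemma phi_inj (p : ℕ) (hp : p.Prime) (h4 : p % 4 = 1) :
    ∀ x ∈ Finset.range p, ∀ y ∈ Finset.range p,
      (1 + 4 * x) % p = (1 + 4 * y) % p → x = y := by
  haveI := Fact.mk hp
  have p5 : 5 ≤ p := by have := hp.two_le; omega
  intro x hx y hy h
  have hx' := Finset.mem_range.mp hx
  have hy' := Finset.mem_range.mp hy
  have hc : ((1 + 4 * x : ℕ) : ZMod p) = ((1 + 4 * y : ℕ) : ZMod p) := by
    rw [← ZMod.natCast_mod (1 + 4 * x) p, ← ZMod.natCast_mod (1 + 4 * y) p, h]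
  push_cast at hc
  have h4ne : (4 : ZMod p) ≠ 0 := by
    intro hh
    have h2 : ((4 : ℕ) : ZMod p) = 0 := by push_cast; exact hh
    rw [ZMod.natCast_eq_zero_iff] at h2
    have := Nat.le_of_dvd (by norm_num) h2
    omega
  have hxy : (x : ZMod p) = y :=
    mul_left_cancel₀ h4ne (by linear_combination hc)
  have := congrArg ZMod.val hxy
  rwa [ZMod.val_cast_of_lt hx', ZMod.val_cast_of_lt hy'] at this

private lemma phi_mem (p : ℕ) (hp : p.Prime) (h4 : p % 4 = 1) :
    ∀ i ∈ (Finset.range p).erase ((p - 1) / 4), (1 + 4 * i) % p ∈ Finset.Ico 1 p := by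
  intro i hi
  have hip : i < p := Finset.mem_range.mp (Finset.mem_of_mem_erase hi)
  have hne : i ≠ (p - 1) / 4 := Finset.ne_of_mem_erase hi
  have hp0 : 0 < p := hp.pos
  rw [Finset.mem_Ico]
  refine ⟨?_, Nat.mod_lt _ hp0⟩
  by_contra h0
  push_neg at h0
  have h0' : (1 + 4 * i) % p = 0 := by omega
  obtain ⟨k, hk⟩ := Nat.dvd_of_mod_eq_zero h0'
  have h1 : p * k < p * 4 := by
    have : p * k = 1 + 4 * i := hk.symm
    omega
  have hk4 : k < 4 := Nat.lt_of_mul_lt_mul_left h1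
  have hk0 : k ≠ 0 := by rintro rfl; omega
  interval_cases k <;> omega

private lemma phi_image (p : ℕ) (hp : p.Prime) (h4 : p % 4 = 1) :
    ((Finset.range p).erase ((p - 1) / 4)).image (fun i => (1 + 4 * i) % p)
      = Finset.Ico 1 p := by
  have p5 : 5 ≤ p := by have := hp.two_le; omega
  have hsub : ((Finset.range p).erase ((p - 1) / 4)).image (fun i => (1 + 4 * i) % p)
      ⊆ Finset.Ico 1 p := by
    intro r hr
    obtain ⟨i, hi, rfl⟩ := Finset.mem_image.mp hr
    exact phi_mem p hp h4 i hi
  refine Finset.eq_of_subset_of_card_le hsub ?_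
  rw [Nat.card_Ico, Finset.card_image_of_injOn, Finset.card_erase_of_mem, Finset.card_range]
  · exact Finset.mem_range.mpr (by omega)
  · intro x hx y hy hxy
    exact phi_inj p hp h4 x (Finset.mem_of_mem_erase hx) y (Finset.mem_of_mem_erase hy) hxy

private lemma prod_one_add_range (m : ℕ) : ∏ i ∈ Finset.range m, (1 + i) = Nat.factorial m := by
  induction m with
  | zero => simp
  | succ m ih =>
    rw [Finset.prod_range_succ, ih, Nat.factorial_succ]
    ring

private lemma main_cong (p : ℕ) (hp : p.Prime) (h4 : p % 4 = 1) (n : ℕ) :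
    (2 ^ (p - 1) * ∏ i ∈ (Finset.range p).erase ((p - 1) / 4), (1 + 4 * (i + n * p)))
      ≡ (∏ i ∈ (Finset.range p).erase (p - 1), (1 + i + n * p)) [MOD p ^ 2] := by
  haveI := Fact.mk hp
  have p5 : 5 ≤ p := by have := hp.two_le; omega
  set s := (Finset.range p).erase ((p - 1) / 4) with hs
  set t := (Finset.range p).erase (p - 1) with ht
  have ht' : t = Finset.range (p - 1) := by
    rw [ht]; ext x; simp only [Finset.mem_erase, Finset.mem_range]; omega
  have knz : ∀ k : ℕ, 0 < k → k < p → ((k : ℕ) : ZMod p) ≠ 0 := by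
    intro k h0 h1 hh
    rw [ZMod.natCast_eq_zero_iff] at hh
    have := Nat.le_of_dvd h0 hh
    omega
  -- Fermat quotient
  have h2nz : ((2 : ℕ) : ZMod p) ≠ 0 := knz 2 (by norm_num) (by omega)
  have hferm' : ((2 : ZMod p)) ^ (p - 1) = 1 :=
    ZMod.pow_card_sub_one_eq_one (by exact_mod_cast h2nz)
  have hdvd2 : p ∣ 2 ^ (p - 1) - 1 := by
    have h1 : ((2 ^ (p - 1) - 1 : ℕ) : ZMod p) = 0 := by
      push_cast [Nat.cast_sub (Nat.one_le_two_pow)]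
      rw [hferm']
      ring
    rwa [ZMod.natCast_eq_zero_iff] at h1
  obtain ⟨F, hFm⟩ := hdvd2
  have hferm : 2 ^ (p - 1) = 1 + p * F := by
    have := Nat.one_le_two_pow (n := p - 1)
    omega
  -- binomial sum
  have hEsum : ∑ k ∈ Finset.Ico 1 p, p.choose k = 2 ^ p - 2 := by
    have h1 := Nat.sum_range_choose p
    have h2 : ∑ k ∈ Finset.range (p + 1), p.choose k
        = p.choose 0 + (∑ k ∈ Finset.Ico 1 p, p.choose k + p.choose p) := by
      rw [Finset.range_eq_Ico, Finset.sum_eq_sum_Ico_succ_bot (by omega)]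
      rw [Finset.sum_Ico_succ_top (by omega)]
    rw [h1, Nat.choose_zero_right, Nat.choose_self] at h2
    omega
  have hchooseF : p * ∑ k ∈ Finset.Ico 1 p, p.choose k / p = p * (2 * F) := by
    rw [Finset.mul_sum]
    rw [Finset.sum_congr rfl (fun k hk => Nat.mul_div_cancel'
      (hp.dvd_choose_self (by rw [Finset.mem_Ico] at hk; omega)
        (by rw [Finset.mem_Ico] at hk; omega)))]
    rw [hEsum]
    have h2p : 2 ^ p = 2 + p * (2 * F) := by
      calc 2 ^ p = 2 ^ (p - 1) * 2 := by rw [← pow_succ, show p - 1 + 1 = p by omega]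
        _ = (1 + p * F) * 2 := by rw [hferm]
        _ = 2 + p * (2 * F) := by ring
    omega
  have hmsum : ∑ k ∈ Finset.Ico 1 p, p.choose k / p = 2 * F :=
    Nat.eq_of_mul_eq_mul_left hp.pos hchooseF
  have hmcast : ∀ k ∈ Finset.Ico 1 p, ((p.choose k / p : ℕ) : ZMod p)
      = (-1) ^ (k - 1) * ((k : ℕ) : ZMod p)⁻¹ := by
    intro k hk
    rw [Finset.mem_Ico] at hk
    have hdk := hp.dvd_choose_self (k := k) (by omega) (by omega)
    have hd : p.choose k / p * k = (p - 1).choose (k - 1) := by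
      have h1 := Nat.add_one_mul_choose_eq (p - 1) (k - 1)
      rw [show p - 1 + 1 = p by omega, show k - 1 + 1 = k by omega] at h1
      have h2 : p * (p.choose k / p * k) = p * (p - 1).choose (k - 1) := by
        rw [← Nat.mul_assoc, Nat.mul_div_cancel' hdk, h1]
      exact Nat.eq_of_mul_eq_mul_left hp.pos h2
    have h3 : ((p.choose k / p : ℕ) : ZMod p) * ((k : ℕ) : ZMod p) = (-1) ^ (k - 1) := by
      have h5 := congrArg (Nat.cast : ℕ → ZMod p) hd
      push_cast at h5
      rw [h5]
      exact choose_neg_one p hp (k - 1) (by omega)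
    rw [eq_mul_inv_iff_mul_eq₀ (knz k (by omega) (by omega))]
    exact h3
  -- harmonic sums
  have hI : ∑ r ∈ Finset.Ico 1 p, ((r : ℕ) : ZMod p)⁻¹ = 0 := by
    refine sum_inv_zero_s7 p hp (by omega) _ ?_ ?_
    · intro r hr; rw [Finset.mem_Ico] at hr; omega
    · intro r hr; rw [Finset.mem_Ico] at hr ⊢; omega
  have hII : ∑ r ∈ (Finset.Ico 1 p).filter (fun r => r % 4 = 2 ∨ r % 4 = 3),
      ((r : ℕ) : ZMod p)⁻¹ = 0 := by
    refine sum_inv_zero_s7 p hp (by omega) _ ?_ ?_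
    · intro r hr; rw [Finset.mem_filter, Finset.mem_Ico] at hr; omega
    · intro r hr; rw [Finset.mem_filter, Finset.mem_Ico] at hr ⊢; omega
  -- the core mod-p identity
  have hcore : ((F : ℕ) : ZMod p)
      + ∑ r ∈ Finset.Ico 1 p, (((5 - r % 4) % 4 : ℕ) : ZMod p) * ((r : ℕ) : ZMod p)⁻¹ = 0 := by
    have h2F : (2 : ZMod p) * ((F : ℕ) : ZMod p)
        = ∑ k ∈ Finset.Ico 1 p, (-1) ^ (k - 1) * ((k : ℕ) : ZMod p)⁻¹ := by
      have h5 := congrArg (Nat.cast : ℕ → ZMod p) hmsum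
      push_cast at h5
      rw [← h5]
      exact Finset.sum_congr rfl hmcast
    have h2T : (2 : ZMod p) * (((F : ℕ) : ZMod p)
        + ∑ r ∈ Finset.Ico 1 p, (((5 - r % 4) % 4 : ℕ) : ZMod p) * ((r : ℕ) : ZMod p)⁻¹) = 0 := by
      rw [mul_add, h2F, Finset.mul_sum, ← Finset.sum_add_distrib]
      have hterm : ∀ r ∈ Finset.Ico 1 p, (-1 : ZMod p) ^ (r - 1) * ((r : ℕ) : ZMod p)⁻¹
            + 2 * ((((5 - r % 4) % 4 : ℕ) : ZMod p) * ((r : ℕ) : ZMod p)⁻¹)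
          = ((r : ℕ) : ZMod p)⁻¹
            + (if r % 4 = 2 ∨ r % 4 = 3 then (4 : ZMod p) * ((r : ℕ) : ZMod p)⁻¹ else 0) := by
        intro r hr
        rw [Finset.mem_Ico] at hr
        have hr4 : r % 4 = 0 ∨ r % 4 = 1 ∨ r % 4 = 2 ∨ r % 4 = 3 := by omega
        rcases hr4 with h | h | h | h
        · have hodd : Odd (r - 1) := Nat.odd_iff.mpr (by omega)
          rw [h, hodd.neg_one_pow, if_neg (by omega)]
          norm_num <;> ring
        · have hev : Even (r - 1) := Nat.even_iff.mpr (by omega)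
          rw [h, hev.neg_one_pow, if_neg (by omega)]
          norm_num <;> ring
        · have hodd : Odd (r - 1) := Nat.odd_iff.mpr (by omega)
          rw [h, hodd.neg_one_pow, if_pos (by omega)]
          norm_num <;> ring
        · have hev : Even (r - 1) := Nat.even_iff.mpr (by omega)
          rw [h, hev.neg_one_pow, if_pos (by omega)]
          norm_num <;> ring
      rw [Finset.sum_congr rfl hterm, Finset.sum_add_distrib, hI, ← Finset.sum_filter,
        ← Finset.mul_sum, hII]
      simp
    exact mul_left_cancel₀ (by exact_mod_cast h2nz) (by rw [h2T, mul_zero])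
  
  -- p^2 = 0 in ZMod (p^2)
  have hp2 : ((p : ZMod (p ^ 2))) ^ 2 = 0 := by
    have := ZMod.natCast_self (p ^ 2)
    push_cast at this
    linear_combination this
  have hinj : ∀ x ∈ s, ∀ y ∈ s, (1 + 4 * x) % p = (1 + 4 * y) % p → x = y := fun x hx y hy hxy =>
    phi_inj p hp h4 x (Finset.mem_of_mem_erase hx) y (Finset.mem_of_mem_erase hy) hxy
  have hWs : ∏ i ∈ s, ((1 + 4 * i) % p) = Nat.factorial (p - 1) := by
    have h1 := Finset.prod_Ico_id_eq_factorial (p - 1)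
    rw [show p - 1 + 1 = p by omega] at h1
    rw [← phi_image p hp h4, Finset.prod_image hinj] at h1
    exact h1
  have htprod : ∏ i ∈ t, (1 + i) = Nat.factorial (p - 1) := by
    rw [ht']; exact prod_one_add_range (p - 1)
  have hfactA : ∀ i : ℕ, 1 + 4 * (i + n * p) = (1 + 4 * i) % p + p * ((1 + 4 * i) / p + 4 * n) := by
    intro i
    have hdm := Nat.div_add_mod (1 + 4 * i) p
    have h1 : (1 + 4 * i) % p + p * ((1 + 4 * i) / p + 4 * n)
        = (p * ((1 + 4 * i) / p) + (1 + 4 * i) % p) + 4 * (n * p) := by ring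
    rw [h1, hdm]
    ring
  have hA : ((∏ i ∈ s, (1 + 4 * (i + n * p)) : ℕ) : ZMod (p ^ 2))
      = (Nat.factorial (p - 1) : ZMod (p ^ 2))
        + (p : ZMod (p ^ 2)) * ((∑ i ∈ s, ((1 + 4 * i) / p + 4 * n)
            * ∏ j ∈ s.erase i, ((1 + 4 * j) % p) : ℕ) : ZMod (p ^ 2)) := by
    rw [show (∏ i ∈ s, (1 + 4 * (i + n * p)))
        = ∏ i ∈ s, ((1 + 4 * i) % p + p * ((1 + 4 * i) / p + 4 * n)) from
      Finset.prod_congr rfl fun i _ => hfactA i]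
    push_cast
    rw [expand_prod hp2 s (fun i => (((1 + 4 * i) % p : ℕ) : ZMod (p ^ 2)))
      (fun i => (((1 + 4 * i) / p : ℕ) : ZMod (p ^ 2)) + 4 * (n : ZMod (p ^ 2)))]
    rw [← hWs]
    push_cast
    ring
  have hB : ((∏ i ∈ t, (1 + i + n * p) : ℕ) : ZMod (p ^ 2))
      = (Nat.factorial (p - 1) : ZMod (p ^ 2))
        + (p : ZMod (p ^ 2)) * ((∑ i ∈ t, n * ∏ j ∈ t.erase i, (1 + j) : ℕ) : ZMod (p ^ 2)) := by
    rw [show (∏ i ∈ t, (1 + i + n * p)) = ∏ i ∈ t, ((1 + i) + p * n) from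
      Finset.prod_congr rfl fun i _ => by ring]
    push_cast
    rw [expand_prod hp2 t (fun i => 1 + (i : ZMod (p ^ 2))) (fun i => (n : ZMod (p ^ 2)))]
    rw [← htprod]
    push_cast
    ring
  -- mod p values of the correction sums
  have hprod_eraseA : ∀ i ∈ s, (∏ j ∈ s.erase i, (((1 + 4 * j) % p : ℕ) : ZMod p))
      = ((Nat.factorial (p - 1) : ℕ) : ZMod p) * (((1 + 4 * i) % p : ℕ) : ZMod p)⁻¹ := by
    intro i hi
    have hmem := phi_mem p hp h4 i hi
    rw [Finset.mem_Ico] at hmem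
    have hnz := knz _ hmem.1 hmem.2
    rw [eq_mul_inv_iff_mul_eq₀ hnz]
    have h1 := Finset.prod_erase_mul s (fun j => (((1 + 4 * j) % p : ℕ) : ZMod p)) hi
    rw [h1, ← Nat.cast_prod, hWs]
  have hNAK : ((∑ i ∈ s, ((1 + 4 * i) / p + 4 * n)
        * ∏ j ∈ s.erase i, ((1 + 4 * j) % p) : ℕ) : ZMod p)
      = ((Nat.factorial (p - 1) : ℕ) : ZMod p)
        * ∑ r ∈ Finset.Ico 1 p, (((5 - r % 4) % 4 : ℕ) : ZMod p) * ((r : ℕ) : ZMod p)⁻¹ := by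
    push_cast
    have hq4 : ∀ i ∈ s, (((1 + 4 * i) / p : ℕ) : ZMod p)
        = (((5 - ((1 + 4 * i) % p) % 4) % 4 : ℕ) : ZMod p) := by
      intro i hi
      have hip : i < p := Finset.mem_range.mp (Finset.mem_of_mem_erase hi)
      congr 1
      have hdm := Nat.div_add_mod (1 + 4 * i) p
      have hql : (1 + 4 * i) / p < 4 := Nat.div_lt_of_lt_mul (by omega)
      have hqm : (p * ((1 + 4 * i) / p)) % 4 = ((1 + 4 * i) / p) % 4 := by
        conv_lhs => rw [Nat.mul_mod, h4]
        simp [Nat.mod_mod_of_dvd]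
      generalize hC : (1 + 4 * i) % p = C at hdm ⊢
      generalize hQ : (1 + 4 * i) / p = Q at hdm hqm hql ⊢
      generalize hX : p * Q = X at hdm hqm
      omega
    rw [Finset.sum_congr rfl (fun i hi => by
      rw [hprod_eraseA i hi, hq4 i hi])]
    have hSc : ∑ i ∈ s, (((1 + 4 * i) % p : ℕ) : ZMod p)⁻¹ = 0 := by
      have h1 : ∑ r ∈ Finset.Ico 1 p, ((r : ℕ) : ZMod p)⁻¹
          = ∑ i ∈ s, (((1 + 4 * i) % p : ℕ) : ZMod p)⁻¹ := by
        rw [← phi_image p hp h4, Finset.sum_image hinj]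
      rw [← h1, hI]
    have hSt : ∑ r ∈ Finset.Ico 1 p, (((5 - r % 4) % 4 : ℕ) : ZMod p) * ((r : ℕ) : ZMod p)⁻¹
        = ∑ i ∈ s, ((((5 - ((1 + 4 * i) % p) % 4) % 4 : ℕ)) : ZMod p)
            * (((1 + 4 * i) % p : ℕ) : ZMod p)⁻¹ := by
      rw [← phi_image p hp h4, Finset.sum_image hinj]
    rw [hSt, Finset.mul_sum, ← sub_eq_zero, ← Finset.sum_sub_distrib]
    have hterm2 : ∀ i ∈ s, ((((5 - ((1 + 4 * i) % p) % 4) % 4 : ℕ) : ZMod p) + 4 * (n : ZMod p))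
          * (((Nat.factorial (p - 1) : ℕ) : ZMod p) * (((1 + 4 * i) % p : ℕ) : ZMod p)⁻¹)
          - ((Nat.factorial (p - 1) : ℕ) : ZMod p)
            * ((((5 - ((1 + 4 * i) % p) % 4) % 4 : ℕ) : ZMod p) * (((1 + 4 * i) % p : ℕ) : ZMod p)⁻¹)
        = (4 * (n : ZMod p) * ((Nat.factorial (p - 1) : ℕ) : ZMod p))
            * (((1 + 4 * i) % p : ℕ) : ZMod p)⁻¹ := by
      intro i _
      ring
    rw [Finset.sum_congr rfl hterm2, ← Finset.mul_sum, hSc, mul_zero]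
  have hNBK : ((∑ i ∈ t, n * ∏ j ∈ t.erase i, (1 + j) : ℕ) : ZMod p) = 0 := by
    push_cast
    have htprodK : ∏ j ∈ t, (1 + (j : ZMod p)) = ((Nat.factorial (p - 1) : ℕ) : ZMod p) := by
      have h5 := congrArg (Nat.cast : ℕ → ZMod p) htprod
      push_cast at h5
      exact h5
    have hprod_eraseB : ∀ i ∈ t, (∏ j ∈ t.erase i, (1 + (j : ZMod p)))
        = ((Nat.factorial (p - 1) : ℕ) : ZMod p) * (1 + (i : ZMod p))⁻¹ := by
      intro i hi
      have hit : i < p - 1 := by rw [ht'] at hi; exact Finset.mem_range.mp hi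
      have hnz : (1 + (i : ZMod p)) ≠ 0 := by
        have h6 := knz (1 + i) (by omega) (by omega)
        push_cast at h6
        exact h6
      rw [eq_mul_inv_iff_mul_eq₀ hnz]
      have h1 := Finset.prod_erase_mul t (fun j => (1 + (j : ZMod p))) hi
      rw [h1, htprodK]
    rw [Finset.sum_congr rfl (fun i hi => by rw [hprod_eraseB i hi])]
    have hSb : ∑ i ∈ t, (1 + (i : ZMod p))⁻¹ = 0 := by
      have himgB : t.image (fun i => 1 + i) = Finset.Ico 1 p := by
        rw [ht']
        ext x
        simp only [Finset.mem_image, Finset.mem_range, Finset.mem_Ico]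
        constructor
        · rintro ⟨a, ha, rfl⟩; omega
        · rintro ⟨h1, h2⟩; exact ⟨x - 1, by omega, by omega⟩
      have h1 : ∑ r ∈ Finset.Ico 1 p, ((r : ℕ) : ZMod p)⁻¹
          = ∑ i ∈ t, (((1 + i : ℕ) : ZMod p))⁻¹ := by
        rw [← himgB, Finset.sum_image (fun x _ y _ h => by omega)]
      push_cast at h1
      rw [← h1]
      exact hI
    simp only [← mul_assoc]
    rw [← Finset.mul_sum, hSb, mul_zero]
  -- transfer to ZMod (p^2)
  have hKeq : ((F * Nat.factorial (p - 1)
        + ∑ i ∈ s, ((1 + 4 * i) / p + 4 * n) * ∏ j ∈ s.erase i, ((1 + 4 * j) % p) : ℕ) : ZMod p)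
      = ((∑ i ∈ t, n * ∏ j ∈ t.erase i, (1 + j) : ℕ) : ZMod p) := by
    rw [Nat.cast_add, Nat.cast_mul, hNAK, hNBK]
    linear_combination ((Nat.factorial (p - 1) : ℕ) : ZMod p) * hcore
  have hkey := mul_p_congr p _ _ hKeq
  rw [← ZMod.natCast_eq_natCast_iff, Nat.cast_mul, Nat.cast_pow, hA, hB]
  have h2R : ((2 : ℕ) : ZMod (p ^ 2)) ^ (p - 1)
      = 1 + (p : ZMod (p ^ 2)) * ((F : ℕ) : ZMod (p ^ 2)) := by
    have h5 : ((2 ^ (p - 1) : ℕ) : ZMod (p ^ 2)) = ((1 + p * F : ℕ) : ZMod (p ^ 2)) := by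
      rw [hferm]
    push_cast at h5
    exact h5
  rw [h2R]
  rw [Nat.cast_add, Nat.cast_mul] at hkey
  linear_combination hkey + (((F : ℕ) : ZMod (p ^ 2))
    * ((∑ i ∈ s, ((1 + 4 * i) / p + 4 * n) * ∏ j ∈ s.erase i, ((1 + 4 * j) % p) : ℕ)
      : ZMod (p ^ 2))) * hp2



/-- For a prime `p ≡ 1 (mod 4)` and `n` with `p ∤ n+1`,
`4^p ∏_{i=0}^{p-1} ((1+4(i+np))/(1+i+np))^2 ≡ 4 ((1+4n)/(1+n))^2 (mod p^2)`. -/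
theorem prod_ratio_cong (p : ℕ) (hp : p.Prime) (h4 : p % 4 = 1) (n : ℕ)
    (hn : ¬ p ∣ (n + 1)) :
    padicNorm p
      ((4 : ℚ) ^ p * (∏ i ∈ Finset.range p,
          ((1 + 4 * ((i : ℚ) + n * p)) / (1 + (i : ℚ) + n * p)) ^ 2)
        - 4 * ((1 + 4 * (n : ℚ)) / (1 + (n : ℚ))) ^ 2)
      ≤ (p : ℚ) ^ (-(2 : ℤ)) := by
  haveI := Fact.mk hp
  have p5 : 5 ≤ p := by have := hp.two_le; omega
  set s := (Finset.range p).erase ((p - 1) / 4) with hs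
  set t := (Finset.range p).erase (p - 1) with ht
  set A := ∏ i ∈ s, (1 + 4 * (i + n * p)) with hA
  set B := ∏ i ∈ t, (1 + i + n * p) with hB
  have knz : ∀ k : ℕ, 0 < k → k < p → ((k : ℕ) : ZMod p) ≠ 0 := by
    intro k h0 h1 hh
    rw [ZMod.natCast_eq_zero_iff] at hh
    have := Nat.le_of_dvd h0 hh
    omega
  have hBnz : ¬ p ∣ B := by
    intro hd
    rw [← ZMod.natCast_eq_zero_iff] at hd
    have hBv : ((B : ℕ) : ZMod p) = ∏ i ∈ t, (1 + (i : ZMod p)) := by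
      rw [hB]
      push_cast [ZMod.natCast_self]
      ring_nf
    rw [hBv] at hd
    obtain ⟨i, hi, h0⟩ := Finset.prod_eq_zero_iff.mp hd
    have hit : i < p - 1 := by rw [ht] at hi; simp only [Finset.mem_erase, Finset.mem_range] at hi; omega
    have := knz (1 + i) (by omega) (by omega)
    push_cast at this
    exact this h0
  have hB0 : (B : ℚ) ≠ 0 := by
    intro h
    rw [Nat.cast_eq_zero] at h
    exact hBnz (h ▸ dvd_zero p)
  have hn1 : ((1 : ℚ) + n) ≠ 0 := by positivity
  have hpq : (p : ℚ) ≠ 0 := by positivity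
  -- split the products
  have hNfull : ∏ i ∈ Finset.range p, (1 + 4 * ((i : ℚ) + n * p)) = p * (1 + 4 * n) * (A : ℚ) := by
    have hmem : (p - 1) / 4 ∈ Finset.range p := Finset.mem_range.mpr (by omega)
    rw [← Finset.prod_erase_mul _ _ hmem]
    have hterm : (1 : ℚ) + 4 * (((p - 1) / 4 : ℕ) + (n : ℚ) * p) = p * (1 + 4 * n) := by
      have h40 : (4 * ((p - 1) / 4) : ℕ) = p - 1 := by omega
      have h41 : ((4 * ((p - 1) / 4) : ℕ) : ℚ) = ((p : ℚ) - 1) := by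
        rw [h40]
        push_cast [Nat.cast_sub hp.one_le]
        ring
      push_cast at h41
      linear_combination h41
    rw [hterm, hA]
    push_cast
    ring
  have hDfull : ∏ i ∈ Finset.range p, (1 + (i : ℚ) + n * p) = p * (1 + n) * (B : ℚ) := by
    have hmem : p - 1 ∈ Finset.range p := Finset.mem_range.mpr (by omega)
    rw [← Finset.prod_erase_mul _ _ hmem]
    have hterm : (1 : ℚ) + ((p - 1 : ℕ) : ℚ) + (n : ℚ) * p = p * (1 + n) := by
      push_cast [Nat.cast_sub hp.one_le]
      ring
    rw [hterm, hB]
    push_cast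
    ring
  have hsplit : (4 : ℚ) ^ p * (∏ i ∈ Finset.range p,
          ((1 + 4 * ((i : ℚ) + n * p)) / (1 + (i : ℚ) + n * p)) ^ 2)
        - 4 * ((1 + 4 * (n : ℚ)) / (1 + (n : ℚ))) ^ 2
      = ((((1 + 4 * n) ^ 2 * (4 ^ p * (A : ℤ) ^ 2 - 4 * (B : ℤ) ^ 2) : ℤ)) : ℚ)
        / ((((1 + n) ^ 2 * (B : ℤ) ^ 2 : ℤ)) : ℚ) := by
    rw [Finset.prod_pow, Finset.prod_div_distrib, hNfull, hDfull]
    push_cast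
    field_simp
  rw [hsplit, padicNorm.div]
  have hD1 : padicNorm p ((((1 + n) ^ 2 * (B : ℤ) ^ 2 : ℤ)) : ℚ) = 1 := by
    rw [padicNorm.int_eq_one_iff]
    intro hd
    have hpz : Prime (p : ℤ) := Nat.prime_iff_prime_int.mp hp
    rcases hpz.dvd_mul.mp hd with h | h
    · have h2 := hpz.dvd_of_dvd_pow h
      rw [show ((1 : ℤ) + n) = ((n + 1 : ℕ) : ℤ) by push_cast; ring] at h2
      rw [Int.natCast_dvd_natCast] at h2
      exact hn h2
    · have h2 := hpz.dvd_of_dvd_pow h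
      rw [Int.natCast_dvd_natCast] at h2
      exact hBnz h2
  rw [hD1, div_one]
  -- divisibility
  have hmc := main_cong p hp h4 n
  rw [← hs, ← ht, ← hA, ← hB] at hmc
  have hsq := hmc.mul hmc
  have hzdvd := hsq.dvd
  push_cast at hzdvd
  have hCeq : ((1 + 4 * n) ^ 2 * (4 ^ p * (A : ℤ) ^ 2 - 4 * (B : ℤ) ^ 2) : ℤ)
      = (-(4 * (1 + 4 * (n : ℤ)) ^ 2))
        * ((B : ℤ) * B - (2 ^ (p - 1) * (A : ℤ)) * (2 ^ (p - 1) * (A : ℤ))) := by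
    have e1 : (4 : ℤ) ^ p = 4 * (2 ^ (p - 1) * 2 ^ (p - 1)) := by
      have h1 : (2 : ℤ) ^ p = 2 ^ (p - 1) * 2 := by
        rw [← pow_succ, show p - 1 + 1 = p by omega]
      calc (4 : ℤ) ^ p = 2 ^ p * 2 ^ p := by
            rw [show (4 : ℤ) = 2 * 2 by norm_num, mul_pow]
        _ = 4 * (2 ^ (p - 1) * 2 ^ (p - 1)) := by rw [h1]; ring
    rw [e1]
    ring
  have hCdvd : ((p ^ 2 : ℕ) : ℤ) ∣ ((1 + 4 * n) ^ 2 * (4 ^ p * (A : ℤ) ^ 2 - 4 * (B : ℤ) ^ 2) : ℤ) := by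
    rw [hCeq]
    push_cast
    exact Dvd.dvd.mul_left hzdvd _
  have := (padicNorm.dvd_iff_norm_le (n := 2)).mp hCdvd
  simpa using this
end
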